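/- Suppose G ∈ Q[x,y] is such that every solution (x,y,z,w) ∈ Q^4 of G(x,y) = G(z,w) satisfies (x,y) = (z,w) or lies in a fixed finite set E. Let p be an odd prime and b ∈ Q such that no element of the form a·t^p + b (for the chosen a ≠ 0, t ∈ Q) equals any coordinate appearing in E. Then f(x,y) = G(a x^p + b, a y^p + b) is injective as a map Q × Q → Q. -/

import Mathlib

/-- Suppose `G ∈ ℚ[x,y]` is such that every solution of `G(x,y) = G(z,w)` either
satisfies `(x,y) = (z,w)` or lies in a fixed finite set `E`. Let `p` be an odd prime and
`a ≠ 0`, `b ∈ ℚ` be such that no value `a·t^p + b` equals a coordinate of an element of `E`.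
Then `f(x,y) = G(a x^p + b, a y^p + b)` is injective as a map `ℚ × ℚ → ℚ`. -/
theorem stmt_15 (G : MvPolynomial (Fin 2) ℚ) (E : Set (ℚ × ℚ × ℚ × ℚ)) (hEfin : E.Finite)
    (hE : ∀ x y z w : ℚ, MvPolynomial.eval ![x, y] G = MvPolynomial.eval ![z, w] G →
      (x, y) = (z, w) ∨ (x, y, z, w) ∈ E)
    (p : ℕ) (hp : p.Prime) (hodd : Odd p)
    (a b : ℚ) (ha : a ≠ 0)
    (havoid : ∀ q ∈ E, ∀ t : ℚ, a * t ^ p + b ≠ q.1 ∧ a * t ^ p + b ≠ q.2.1 ∧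
      a * t ^ p + b ≠ q.2.2.1 ∧ a * t ^ p + b ≠ q.2.2.2) :
    Function.Injective (fun xy : ℚ × ℚ =>
      MvPolynomial.eval ![a * xy.1 ^ p + b, a * xy.2 ^ p + b] G) := by
  intro ⟨x, y⟩ ⟨z, w⟩ h
  simp only at h
  rcases hE _ _ _ _ h with heq | hmem
  · have hpowinj : Function.Injective (fun t : ℚ => t ^ p) :=
      (Odd.strictMono_pow hodd).injective
    have h1 : x ^ p = z ^ p := by
      have := congrArg Prod.fst heq
      simp only at this
      field_simp at this
      exact mul_left_cancel₀ ha (add_right_cancel this)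
    have h2 : y ^ p = w ^ p := by
      have := congrArg Prod.snd heq
      simp only at this
      field_simp at this
      exact mul_left_cancel₀ ha (add_right_cancel this)
    exact Prod.ext (hpowinj h1) (hpowinj h2)
  · exact absurd rfl (havoid _ hmem x).1
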